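/- Let K/k be a purely inseparable extension of characteristic p > 0. Then K is finite over its relative perfect closure rp(K/k) if and only if K is finite over k(K^p). -/

import Mathlib

/-!
Common definitions: purely inseparable extension theory (r-bases, degree of
irrationality, relative perfect closure, modularity), following Fliouet,
"Extensions absolument lq-finies".
-/

open IntermediateField

noncomputable section

/-- `k(K^p)`: the intermediate field of `K/k` generated by the `p`-th powers of `K`. -/
def pClosure (k K : Type*) [Field k] [Field K] [Algebra k K] (p : ℕ) : IntermediateField k K :=
  adjoin k {x : K | ∃ y : K, y ^ p = x}

/-- `k(K^{p^n})`. -/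
def pnClosure (k K : Type*) [Field k] [Field K] [Algebra k K] (p n : ℕ) : IntermediateField k K :=
  adjoin k {x : K | ∃ y : K, y ^ p ^ n = x}

/-- `k(L^p)` for an intermediate field `L` of `Ω/k`. -/
def pClosureOf {k Ω : Type*} [Field k] [Field Ω] [Algebra k Ω] (p : ℕ)
    (L : IntermediateField k Ω) : IntermediateField k Ω :=
  adjoin k {x : Ω | ∃ y ∈ L, y ^ p = x}

/-- `B` is `r`-free over the intermediate field `L` (typically `L = k(K^p)`):
no `x ∈ B` belongs to `L(B \ {x})`. -/
def RFreeOver {k K : Type*} [Field k] [Field K] [Algebra k K]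
    (L : IntermediateField k K) (B : Set K) : Prop :=
  ∀ x ∈ B, x ∉ adjoin L (B \ {x})

/-- `B` is an `r`-basis of `K/k` : `K = k(K^p)(B)` and `B` is `r`-free over `k(K^p)`. -/
def RBasis (k K : Type*) [Field k] [Field K] [Algebra k K] (p : ℕ) (B : Set K) : Prop :=
  adjoin (pClosure k K p) B = ⊤ ∧ RFreeOver (pClosure k K p) B

/-- `B` is an `r`-basis of `L/F` where `F ≤ L` are intermediate fields of `Ω/k`:
`L = F(L^p)(B)` and no `x ∈ B` lies in `F(L^p)(B \ {x})`. -/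
def RBasisRel {k Ω : Type*} [Field k] [Field Ω] [Algebra k Ω] (p : ℕ)
    (F L : IntermediateField k Ω) (B : Set Ω) : Prop :=
  B ⊆ (L : Set Ω) ∧ F ⊔ pClosureOf p L ⊔ adjoin k B = L ∧
    ∀ x ∈ B, x ∉ F ⊔ pClosureOf p L ⊔ adjoin k (B \ {x})

/-- The degree of irrationality of a bounded-exponent extension:
the cardinality of an `r`-basis of `K/k`. -/
def diCard (k K : Type*) [Field k] [Field K] [Algebra k K] (p : ℕ) : Cardinal :=
  sInf {c : Cardinal | ∃ B : Set K, RBasis k K p B ∧ Cardinal.mk B = c}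

/-- `k^{p^{-n}} ∩ K = {x ∈ K | x^{p^n} ∈ k}`. -/
def expleq (k K : Type*) [Field k] [Field K] [Algebra k K] (p n : ℕ) : IntermediateField k K :=
  adjoin k {x : K | x ^ p ^ n ∈ (algebraMap k K).range}

/-- The degree of irrationality `di(K/k) = sup_n di(k^{p^{-n}} ∩ K / k)`. -/
def di (k K : Type*) [Field k] [Field K] [Algebra k K] (p : ℕ) : Cardinal :=
  ⨆ n : ℕ, diCard k (expleq k K p n) p

/-- The relative perfect closure `rp(K/k)`: the largest intermediate field `L`
with `k(L^p) = L`. -/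
def rp (k K : Type*) [Field k] [Field K] [Algebra k K] (p : ℕ) : IntermediateField k K :=
  sSup {L : IntermediateField k K | pClosureOf p L = L}

/-- `K/k` has unbounded exponent. -/
def UnboundedExp (k K : Type*) [Field k] [Field K] [Algebra k K] (p : ℕ) : Prop :=
  ∀ e : ℕ, ∃ x : K, x ^ p ^ e ∉ (algebraMap k K).range

/-- `K^{p^n}` as a subfield of `K`. -/
def pnPowers (K : Type*) [Field K] (p n : ℕ) : Subfield K :=
  Subfield.closure {x : K | ∃ y : K, y ^ p ^ n = x}

/-- `K/k` is modular: for each `n`, `K^{p^n}` and `k` are linearly disjoint over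
`K^{p^n} ∩ k`, i.e. every finite family of elements of `K^{p^n}` that is linearly
independent over `K^{p^n} ∩ k` remains linearly independent over `k`. -/
def Modular (k K : Type*) [Field k] [Field K] [Algebra k K] (p : ℕ) : Prop :=
  ∀ n : ℕ, ∀ s : Finset K, (↑s : Set K) ⊆ (pnPowers K p n : Set K) →
    LinearIndependent ↥(pnPowers K p n ⊓ (algebraMap k K).fieldRange)
      (fun x : s => (x : K)) →
    LinearIndependent ↥((algebraMap k K).fieldRange) (fun x : s => (x : K))

/-- The exponent `o(a, F)` of `a` over an intermediate field `F`:
the least `m` with `a^{p^m} ∈ F`. -/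
def expOf {k K : Type*} [Field k] [Field K] [Algebra k K] (p : ℕ)
    (F : IntermediateField k K) (a : K) : ℕ :=
  sInf {m : ℕ | a ^ p ^ m ∈ F}

/-- An intermediate field `L` of `K/k` is equiexponential of exponent `e` over `k`:
there is an `r`-basis `G` of `L/k` with `o(a, k(G \ {a})) = o(a, k) = e` for all `a ∈ G`. -/
def EquiExpOf {k K : Type*} [Field k] [Field K] [Algebra k K] (p : ℕ)
    (e : ℕ) (L : IntermediateField k K) : Prop :=
  ∃ G : Set K, RBasisRel p ⊥ L G ∧
    ∀ a ∈ G, expOf p (adjoin k (G \ {a})) a = e ∧ expOf p (⊥ : IntermediateField k K) a = e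

end

section StatementEightAux

open IntermediateField Module

set_option linter.unusedSectionVars false

variable (p : ℕ) [Fact p.Prime] (k K : Type*) [Field k] [Field K] [Algebra k K] [CharP k p]

variable {p k K} in
/-- Frobenius pushes adjoins to adjoins of `p`-th powers. -/
lemma aux_pow_mem_adjoin {S : Set K} {x : K}
    (hx : x ∈ adjoin k S) : x ^ p ∈ adjoin k ((· ^ p) '' S) := by
  haveI : CharP K p := charP_of_injective_algebraMap (algebraMap k K).injective p
  haveI : ExpChar K p := .prime Fact.out
  set E := adjoin k ((· ^ p) '' S) with hE
  let T : IntermediateField k K :=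
    { E.toSubfield.comap (frobenius K p) with
      algebraMap_mem' := fun r => by
        show frobenius K p (algebraMap k K r) ∈ E.toSubfield
        rw [frobenius_def, ← map_pow]
        exact E.algebraMap_mem _ }
  have hST : adjoin k S ≤ T := by
    rw [adjoin_le_iff]
    intro s hs
    show frobenius K p s ∈ E.toSubfield
    rw [frobenius_def]
    exact subset_adjoin k _ ⟨s, hs, rfl⟩
  have h1 : x ∈ T := hST hx
  have h2 : frobenius K p x ∈ E.toSubfield := h1
  rwa [frobenius_def] at h2

lemma aux_pnClosure_zero : pnClosure k K p 0 = ⊤ := by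
  rw [eq_top_iff]
  intro x _
  exact subset_adjoin k _ ⟨x, by rw [pow_zero, pow_one]⟩

lemma aux_pnClosure_one : pnClosure k K p 1 = pClosure k K p := by
  unfold pnClosure pClosure
  simp [pow_one]

variable {p k K} in
lemma aux_mem_succ {x : K} (n : ℕ) (hx : x ∈ pnClosure k K p n) :
    x ^ p ∈ pnClosure k K p (n + 1) := by
  have h := aux_pow_mem_adjoin (p := p) (k := k) (K := K) (S := {x : K | ∃ y : K, y ^ p ^ n = x}) hx
  refine adjoin.mono k _ _ ?_ h
  rintro _ ⟨_, ⟨y, rfl⟩, rfl⟩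
  exact ⟨y, by show y ^ p ^ (n + 1) = (y ^ p ^ n) ^ p; rw [← pow_mul, pow_succ]⟩

lemma aux_pnClosure_antitone (n : ℕ) : pnClosure k K p (n + 1) ≤ pnClosure k K p n := by
  rw [pnClosure, adjoin_le_iff]
  rintro _ ⟨y, rfl⟩
  exact subset_adjoin k _ ⟨y ^ p, by rw [← pow_mul, ← pow_succ']⟩

lemma aux_pClosureOf_le (E : IntermediateField k K) : pClosureOf p E ≤ E := by
  rw [pClosureOf, adjoin_le_iff]
  rintro _ ⟨y, hy, rfl⟩
  exact pow_mem hy p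

lemma aux_succ_le_pClosureOf (n : ℕ) :
    pnClosure k K p (n + 1) ≤ pClosureOf p (pnClosure k K p n) := by
  rw [pnClosure, adjoin_le_iff]
  rintro _ ⟨y, rfl⟩
  refine subset_adjoin k _ ⟨y ^ p ^ n, subset_adjoin k _ ⟨y, rfl⟩, ?_⟩
  rw [← pow_mul, ← pow_succ]

lemma aux_rp_le_pnClosure (n : ℕ) : rp k K p ≤ pnClosure k K p n := by
  induction n with
  | zero => rw [aux_pnClosure_zero]; exact le_top
  | succ m ih =>
    refine sSup_le fun L hL => ?_
    conv_lhs => rw [← hL]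
    rw [pClosureOf, adjoin_le_iff]
    rintro _ ⟨y, hy, rfl⟩
    have hyn : y ∈ pnClosure k K p m := ih (le_sSup hL hy)
    exact aux_mem_succ m hyn

lemma aux_rp_le_pClosure : rp k K p ≤ pClosure k K p := by
  rw [← aux_pnClosure_one]
  exact aux_rp_le_pnClosure p k K 1

variable {p k K} in
lemma aux_fd_mono {E F : IntermediateField k K} (h : E ≤ F)
    [FiniteDimensional ↥E K] : FiniteDimensional ↥F K := by
  exact FiniteDimensional.right ↥E ↥(extendScalars h) K

end StatementEightAux


section StatementEightMain

open IntermediateField Module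

set_option linter.unusedSectionVars false
set_option maxHeartbeats 1000000

variable (p : ℕ) [Fact p.Prime] (k K : Type*) [Field k] [Field K] [Algebra k K] [CharP k p]
  [IsPurelyInseparable k K]

lemma aux_main [FiniteDimensional ↥(pClosure k K p) K] :
    FiniteDimensional ↥(rp k K p) K := by
  classical
  haveI hfd1 : FiniteDimensional ↥(pnClosure k K p 1) K := by
    rw [aux_pnClosure_one]; infer_instance
  obtain ⟨C0, hC0⟩ := Module.finite_def.mp hfd1
  have hCadj : adjoin (↥(pnClosure k K p 1)) (↑C0 : Set K) = ⊤ := by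
    rw [eq_top_iff]
    intro x _
    have hx : x ∈ Submodule.span (↥(pnClosure k K p 1)) (↑C0 : Set K) := by
      rw [hC0]; trivial
    have hle : Submodule.span (↥(pnClosure k K p 1)) (↑C0 : Set K) ≤
        Subalgebra.toSubmodule (adjoin (↥(pnClosure k K p 1)) (↑C0 : Set K)).toSubalgebra :=
      Submodule.span_le.mpr (fun c hc => subset_adjoin _ _ hc)
    exact hle hx
  set A : IntermediateField k K := adjoin k (↑C0 : Set K) with hA
  have hsup1 : pnClosure k K p 1 ⊔ A = ⊤ := by
    have h := restrictScalars_adjoin_eq_sup (F := k) (pnClosure k K p 1) (↑C0 : Set K)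
    rw [hCadj, restrictScalars_top] at h
    exact h.symm
  have hU : ∀ n : ℕ, adjoin k ({x : K | ∃ y : K, y ^ p ^ n = x} ∪ (A : Set K))
      = pnClosure k K p n ⊔ A := by
    intro n
    rw [adjoin_union, adjoin_self]
    rfl
  have hsup : ∀ m : ℕ, pnClosure k K p (m + 1) ⊔ A = ⊤ := by
    intro m
    induction m with
    | zero => exact hsup1
    | succ m ih =>
      rw [eq_top_iff, ← ih]
      refine sup_le ?_ le_sup_right
      rw [pnClosure, adjoin_le_iff]
      rintro x ⟨y, rfl⟩
      have hz : y ^ p ^ m ∈ adjoin k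
          ({x : K | ∃ y : K, y ^ p ^ (m + 1) = x} ∪ (A : Set K)) := by
        rw [hU (m + 1), ih]; trivial
      have h2 := aux_pow_mem_adjoin (p := p) (k := k) (K := K) hz
      have h3 : ((· ^ p) '' ({x : K | ∃ y : K, y ^ p ^ (m + 1) = x} ∪ (A : Set K)))
          ⊆ ({x : K | ∃ y : K, y ^ p ^ (m + 1 + 1) = x} ∪ (A : Set K)) := by
        rintro _ ⟨z, hz', rfl⟩
        rcases hz' with ⟨w, rfl⟩ | hA'
        · exact Or.inl ⟨w, by
            show w ^ p ^ (m + 1 + 1) = (w ^ p ^ (m + 1)) ^ p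
            rw [← pow_mul, pow_succ]⟩
        · exact Or.inr (pow_mem hA' p)
      have h4 := adjoin.mono k _ _ h3 h2
      rw [hU (m + 1 + 1)] at h4
      have hx : y ^ p ^ (m + 1) = (y ^ p ^ m) ^ p := by rw [← pow_mul, pow_succ]
      rw [hx]
      exact h4
  haveI hfinA : FiniteDimensional k ↥A :=
    IntermediateField.finiteDimensional_adjoin (fun x _ => IsPurelyInseparable.isIntegral' k x)
  obtain ⟨t, ht⟩ := Module.finite_def.mp (inferInstance : Module.Finite k ↥A)
  set s : Finset K := t.image Subtype.val with hs_def
  have hsA : (↑s : Set K) ⊆ (A : Set K) := by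
    intro a ha
    rw [hs_def] at ha
    simp only [Finset.coe_image, Set.mem_image] at ha
    obtain ⟨b, -, rfl⟩ := ha
    exact b.2
  have hA_mem_span : ∀ a : K, a ∈ A → a ∈ Submodule.span k (↑s : Set K) := by
    intro a ha
    have h1 : (⟨a, ha⟩ : ↥A) ∈ Submodule.span k (↑t : Set ↥A) := by rw [ht]; trivial
    have h2 : a ∈ Submodule.map A.val.toLinearMap (Submodule.span k (↑t : Set ↥A)) :=
      ⟨⟨a, ha⟩, h1, rfl⟩
    rw [Submodule.map_span] at h2
    refine Submodule.span_le.mpr ?_ h2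
    rintro _ ⟨b, hb, rfl⟩
    exact Submodule.subset_span (Finset.mem_coe.mpr (Finset.mem_image_of_mem _ hb))
  have key : ∀ m : ℕ, Submodule.span (↥(pnClosure k K p (m + 1))) (↑s : Set K) = ⊤ := by
    intro m
    set Ln := pnClosure k K p (m + 1) with hLn
    set W := Submodule.span (↥Ln) (↑s : Set K) with hW
    have hAW : ∀ a : K, a ∈ A → a ∈ W := fun a ha =>
      Submodule.span_subset_span k (↥Ln) _ (hA_mem_span a ha)
    have hone : (1 : K) ∈ W := hAW 1 A.one_mem
    have hmulW : ∀ x y : K, x ∈ W → y ∈ W → x * y ∈ W := by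
      have h1 : W * W ≤ W := by
        rw [hW, Submodule.span_mul_span]
        refine Submodule.span_le.mpr ?_
        rintro _ ⟨a, ha, b, hb, rfl⟩
        exact hAW _ (mul_mem (hsA ha) (hsA hb))
      exact fun x y hx hy => h1 (Submodule.mul_mem_mul hx hy)
    let Sa : Subalgebra (↥Ln) K := W.toSubalgebra hone hmulW
    haveI : Algebra.IsAlgebraic k K := inferInstance
    haveI : Algebra.IsAlgebraic (↥Ln) K := Algebra.IsAlgebraic.tower_top (K := k) (↥Ln)
    have hfield : IsField Sa := Subalgebra.isField_of_algebraic Sa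
    let E' : IntermediateField (↥Ln) K := Sa.toIntermediateField' hfield
    have htop : pnClosure k K p (m + 1) ⊔ A ≤ IntermediateField.restrictScalars k E' := by
      refine sup_le ?_ ?_
      · intro x hx
        exact E'.algebraMap_mem ⟨x, hx⟩
      · intro x hx
        exact hAW x hx
    rw [hsup m] at htop
    rw [eq_top_iff]
    intro x _
    exact htop (by trivial : x ∈ (⊤ : IntermediateField k K))
  have hfinL : ∀ m : ℕ, FiniteDimensional ↥(pnClosure k K p (m + 1)) K := fun m =>
    ⟨by rw [← key m]; exact Submodule.fg_span s.finite_toSet⟩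
  have hrank : ∀ m : ℕ, finrank ↥(pnClosure k K p (m + 1)) K ≤ s.card := by
    intro m
    have h1 := finrank_span_finset_le_card (R := ↥(pnClosure k K p (m + 1))) s
    rw [Set.finrank, key m, finrank_top] at h1
    exact h1
  have hdmul : ∀ m : ℕ, relfinrank (pnClosure k K p (m + 2)) (pnClosure k K p (m + 1))
      * finrank ↥(pnClosure k K p (m + 1)) K = finrank ↥(pnClosure k K p (m + 2)) K :=
    fun m => relfinrank_mul_finrank_top (aux_pnClosure_antitone p k K (m + 1))
  have hdpos : ∀ m : ℕ, 0 < finrank ↥(pnClosure k K p (m + 1)) K := fun m => by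
    haveI := hfinL m
    exact finrank_pos
  have hmono : ∀ m : ℕ,
      finrank ↥(pnClosure k K p (m + 1)) K ≤ finrank ↥(pnClosure k K p (m + 2)) K := by
    intro m
    have hr0 : 0 < relfinrank (pnClosure k K p (m + 2)) (pnClosure k K p (m + 1)) := by
      rcases Nat.eq_zero_or_pos (relfinrank (pnClosure k K p (m + 2))
        (pnClosure k K p (m + 1))) with h0 | h
      · exfalso
        have h2 := hdmul m
        rw [h0, zero_mul] at h2
        exact absurd h2.symm (hdpos (m + 1)).ne'
      · exact h
    calc finrank ↥(pnClosure k K p (m + 1)) K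
        ≤ relfinrank (pnClosure k K p (m + 2)) (pnClosure k K p (m + 1))
          * finrank ↥(pnClosure k K p (m + 1)) K := Nat.le_mul_of_pos_left _ hr0
      _ = finrank ↥(pnClosure k K p (m + 2)) K := hdmul m
  have hstab : ∃ N : ℕ,
      finrank ↥(pnClosure k K p (N + 1)) K = finrank ↥(pnClosure k K p (N + 2)) K := by
    by_contra hcon
    push_neg at hcon
    have hsm : StrictMono (fun m => finrank ↥(pnClosure k K p (m + 1)) K) :=
      strictMono_nat_of_lt_succ fun n => lt_of_le_of_ne (hmono n) (hcon n)
    have h1 : s.card + 1 ≤ finrank ↥(pnClosure k K p (s.card + 1 + 1)) K := hsm.le_apply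
    have h2 := hrank (s.card + 1)
    omega
  obtain ⟨N, hN⟩ := hstab
  have hr1 : relfinrank (pnClosure k K p (N + 2)) (pnClosure k K p (N + 1)) = 1 := by
    have h2 := hdmul N
    rw [← hN] at h2
    exact Nat.eq_of_mul_eq_mul_right (hdpos N) (by rw [one_mul]; exact h2)
  have h21 := aux_pnClosure_antitone p k K (N + 1)
  have hle : pnClosure k K p (N + 1) ≤ pnClosure k K p (N + 2) := by
    rw [relfinrank_eq_finrank_of_le h21] at hr1
    have hbot : extendScalars h21 = ⊥ := IntermediateField.finrank_eq_one_iff.mp hr1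
    intro x hx
    have hx' : x ∈ extendScalars h21 := hx
    rw [hbot, IntermediateField.mem_bot] at hx'
    obtain ⟨y, rfl⟩ := hx'
    exact y.2
  have heq : pnClosure k K p (N + 2) = pnClosure k K p (N + 1) := le_antisymm h21 hle
  have hperf : pClosureOf p (pnClosure k K p (N + 1)) = pnClosure k K p (N + 1) :=
    le_antisymm (aux_pClosureOf_le p k K _)
      (by conv_lhs => rw [← heq]
          exact aux_succ_le_pClosureOf p k K (N + 1))
  have hrpeq : rp k K p = pnClosure k K p (N + 1) :=
    le_antisymm (aux_rp_le_pnClosure p k K (N + 1)) (le_sSup hperf)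
  rw [hrpeq]
  exact hfinL N

end StatementEightMain


/-- A purely inseparable extension `K/k` is finite over its relative
perfect closure iff it is finite over `k(K^p)`. -/
theorem finiteDimensional_rp_iff_finiteDimensional_pClosure
    (p : ℕ) [Fact p.Prime] (k K : Type*) [Field k] [Field K] [Algebra k K] [CharP k p]
    [IsPurelyInseparable k K] :
    FiniteDimensional ↥(rp k K p) K ↔ FiniteDimensional ↥(pClosure k K p) K := by
  constructor
  · intro h
    haveI := h
    exact aux_fd_mono (aux_rp_le_pClosure p k K)
  · intro h
    haveI := h
    exact aux_main p k K
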